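/- Let A and B be positive definite complex n×n matrices and let s, t ∈ ℝ. Then G_s(G_t(A,B), B) = G_{s+t−s·t}(A,B). -/

import Mathlib

open Matrix Kronecker
open scoped ComplexOrder

noncomputable section

/-- Apply a real function to a complex matrix via the spectral decomposition
(meaningful for Hermitian matrices; defined as `0` otherwise). -/
def matFun {n : Type*} [Fintype n] [DecidableEq n]
    (f : ℝ → ℝ) (A : Matrix n n ℂ) : Matrix n n ℂ :=
  if hA : A.IsHermitian then
    (hA.eigenvectorUnitary : Matrix n n ℂ) *
      Matrix.diagonal (fun i => (f (hA.eigenvalues i) : ℂ)) *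
      (hA.eigenvectorUnitary : Matrix n n ℂ)ᴴ
  else 0

/-- Real power of a matrix (via the spectral decomposition). -/
def mpow {n : Type*} [Fintype n] [DecidableEq n] (A : Matrix n n ℂ) (t : ℝ) :
    Matrix n n ℂ :=
  matFun (fun x => x ^ t) A

/-- Logarithm of a matrix (via the spectral decomposition). -/
def mlog {n : Type*} [Fintype n] [DecidableEq n] (A : Matrix n n ℂ) : Matrix n n ℂ :=
  matFun Real.log A

/-- The operator relative entropy `D_op(X‖Y) = X^{1/2} log(X^{1/2} Y⁻¹ X^{1/2}) X^{1/2}`. -/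
def Dop {n : Type*} [Fintype n] [DecidableEq n] (X Y : Matrix n n ℂ) : Matrix n n ℂ :=
  mpow X (1/2) * mlog (mpow X (1/2) * Y⁻¹ * mpow X (1/2)) * mpow X (1/2)

/-- The Belavkin--Staszewski relative entropy `D̂(ρ‖σ) = Re Tr[D_op(ρ‖σ)]`. -/
def BSEntropy {n : Type*} [Fintype n] [DecidableEq n] (ρ σ : Matrix n n ℂ) : ℝ :=
  (Dop ρ σ).trace.re

/-- The weighted matrix geometric mean `G_t(X,Y) = X^{1/2} (X^{-1/2} Y X^{-1/2})^t X^{1/2}`. -/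
def geoMean {n : Type*} [Fintype n] [DecidableEq n] (t : ℝ) (X Y : Matrix n n ℂ) :
    Matrix n n ℂ :=
  mpow X (1/2) * mpow (mpow X (-(1/2)) * Y * mpow X (-(1/2))) t * mpow X (1/2)

/-- Partial trace over the second (B) factor. -/
def ptraceB {R B : Type*} [Fintype B] (M : Matrix (R × B) (R × B) ℂ) : Matrix R R ℂ :=
  Matrix.of fun r r' => ∑ b, M (r, b) (r', b)

/-- Partial trace over the first (R) factor. -/
def ptraceR {R A : Type*} [Fintype R] (M : Matrix (R × A) (R × A) ℂ) : Matrix A A ℂ :=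
  Matrix.of fun a a' => ∑ r, M (r, a) (r, a')

/-- The map associated to a Choi matrix `J` (indexed by `(A × B) × (A × B)`), applied to a
matrix indexed by `(R × A) × (R × A)`. -/
def choiMap {R A B : Type*} [Fintype A] (J : Matrix (A × B) (A × B) ℂ)
    (X : Matrix (R × A) (R × A) ℂ) : Matrix (R × B) (R × B) ℂ :=
  Matrix.of fun p q => ∑ a, ∑ a', X (p.1, a) (q.1, a') * J (a, p.2) (a', q.2)


variable {n : Type*} [Fintype n] [DecidableEq n]

lemma matFun_decomp (f : ℝ → ℝ) {A V : Matrix n n ℂ} {d : n → ℝ}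
    (hV : V * Vᴴ = 1) (hV' : Vᴴ * V = 1)
    (hAVd : A = V * Matrix.diagonal (fun i => (d i : ℂ)) * Vᴴ) :
    matFun f A = V * Matrix.diagonal (fun i => (f (d i) : ℂ)) * Vᴴ := by
  have hD : (Matrix.diagonal (fun i => (d i : ℂ))).IsHermitian := by
    rw [Matrix.IsHermitian, Matrix.diagonal_conjTranspose]
    have hstar : (star fun i => ((d i : ℝ) : ℂ)) = fun i => ((d i : ℝ) : ℂ) :=
      funext fun i => Complex.conj_ofReal _
    rw [hstar]
  have hA : A.IsHermitian := by
    rw [hAVd]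
    exact Matrix.isHermitian_mul_mul_conjTranspose V hD
  set U : Matrix n n ℂ := (hA.eigenvectorUnitary : Matrix n n ℂ) with hUdef
  have hU : U * Uᴴ = 1 := Matrix.mem_unitaryGroup_iff.mp hA.eigenvectorUnitary.2
  have hU' : Uᴴ * U = 1 := Matrix.mem_unitaryGroup_iff'.mp hA.eigenvectorUnitary.2
  have hspec : A = U * Matrix.diagonal (fun i => ((hA.eigenvalues i : ℝ) : ℂ)) * Uᴴ := by
    simpa [Function.comp_def, Matrix.star_eq_conjTranspose] using hA.spectral_theorem
  set lam := hA.eigenvalues with hlamdef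
  set W : Matrix n n ℂ := Vᴴ * U with hWdef
  have hVW : V * W = U := by
    rw [hWdef, ← mul_assoc, hV, one_mul]
  have hWW : W * Wᴴ = 1 := by
    rw [hWdef, Matrix.conjTranspose_mul, Matrix.conjTranspose_conjTranspose,
      mul_assoc, ← mul_assoc U, hU, one_mul, hV']
  have h1 : Matrix.diagonal (fun i => (d i : ℂ)) * W =
      W * Matrix.diagonal (fun i => ((lam i : ℝ) : ℂ)) := by
    have h := hAVd.symm.trans hspec
    calc Matrix.diagonal (fun i => (d i : ℂ)) * W
        = (Vᴴ * (V * Matrix.diagonal (fun i => (d i : ℂ)) * Vᴴ)) * U := by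
          rw [hWdef]; rw [← mul_assoc]; congr 1
          rw [← mul_assoc, ← mul_assoc, hV', one_mul]
      _ = (Vᴴ * (U * Matrix.diagonal (fun i => ((lam i : ℝ) : ℂ)) * Uᴴ)) * U := by rw [h]
      _ = W * Matrix.diagonal (fun i => ((lam i : ℝ) : ℂ)) := by
          rw [hWdef]
          rw [mul_assoc Vᴴ, mul_assoc Vᴴ, mul_assoc, mul_assoc, hU', mul_one, ← mul_assoc]
  have h2 : Matrix.diagonal (fun i => (f (d i) : ℂ)) * W =
      W * Matrix.diagonal (fun i => ((f (lam i) : ℝ) : ℂ)) := by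
    ext i j
    have h1ij : (d i : ℂ) * W i j = W i j * ((lam j : ℝ) : ℂ) := by
      have := congrFun (congrFun h1 i) j
      rwa [Matrix.diagonal_mul, Matrix.mul_diagonal] at this
    rw [Matrix.diagonal_mul, Matrix.mul_diagonal]
    by_cases hw : W i j = 0
    · simp [hw]
    · have hdl : (d i : ℂ) = (lam j : ℂ) := by
        rw [mul_comm] at h1ij
        exact (mul_left_cancel₀ hw h1ij.symm).symm
      have hdl' : d i = lam j := by exact_mod_cast hdl
      rw [hdl', mul_comm]
  have hmat : matFun f A = U * Matrix.diagonal (fun i => ((f (lam i) : ℝ) : ℂ)) * Uᴴ := by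
    rw [matFun, dif_pos hA]
  have h3 : W * (Matrix.diagonal (fun i => ((f (lam i) : ℝ) : ℂ)) * Wᴴ) =
      Matrix.diagonal (fun i => (f (d i) : ℂ)) := by
    rw [← mul_assoc, ← h2, mul_assoc, hWW, mul_one]
  rw [hmat, ← hVW, Matrix.conjTranspose_mul]
  calc V * W * Matrix.diagonal (fun i => ((f (lam i) : ℝ) : ℂ)) * (Wᴴ * Vᴴ)
      = V * (W * (Matrix.diagonal (fun i => ((f (lam i) : ℝ) : ℂ)) * Wᴴ)) * Vᴴ := by
        simp only [mul_assoc]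
    _ = V * Matrix.diagonal (fun i => (f (d i) : ℂ)) * Vᴴ := by rw [h3]

lemma posDef_decomp {A : Matrix n n ℂ} (hA : A.PosDef) :
    ∃ (V : Matrix n n ℂ) (d : n → ℝ), V * Vᴴ = 1 ∧ Vᴴ * V = 1 ∧ (∀ i, 0 < d i) ∧
      A = V * Matrix.diagonal (fun i => (d i : ℂ)) * Vᴴ := by
  refine ⟨(hA.1.eigenvectorUnitary : Matrix n n ℂ), hA.1.eigenvalues,
    Matrix.mem_unitaryGroup_iff.mp hA.1.eigenvectorUnitary.2,
    Matrix.mem_unitaryGroup_iff'.mp hA.1.eigenvectorUnitary.2,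
    hA.eigenvalues_pos, ?_⟩
  simpa [Function.comp_def, Matrix.star_eq_conjTranspose] using hA.1.spectral_theorem

lemma posDef_conj {A : Matrix n n ℂ} (hA : A.PosDef) {N : Matrix n n ℂ} (hN : IsUnit N) :
    (Nᴴ * A * N).PosDef := by
  refine Matrix.PosDef.of_dotProduct_mulVec_pos (Matrix.isHermitian_conjTranspose_mul_mul N hA.1) fun x hx => ?_
  have hdet : IsUnit N.det := (Matrix.isUnit_iff_isUnit_det N).mp hN
  have hx' : N *ᵥ x ≠ 0 := by
    intro h
    apply hx
    have := congrArg (fun v => N⁻¹ *ᵥ v) h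
    simpa [Matrix.mulVec_mulVec, Matrix.nonsing_inv_mul N hdet] using this
  simpa only [Matrix.star_mulVec, Matrix.dotProduct_mulVec, Matrix.vecMul_vecMul]
    using hA.dotProduct_mulVec_pos hx'

lemma posDef_unitary_conj {V : Matrix n n ℂ} {d : n → ℝ}
    (hV : V * Vᴴ = 1) (hV' : Vᴴ * V = 1) (hd : ∀ i, 0 < d i) :
    (V * Matrix.diagonal (fun i => (d i : ℂ)) * Vᴴ).PosDef := by
  have hDiag : (Matrix.diagonal (fun i => (d i : ℂ))).PosDef :=
    Matrix.PosDef.diagonal fun i => by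
      simpa using Complex.zero_lt_real.mpr (hd i)
  have hVu : IsUnit Vᴴ := ⟨⟨Vᴴ, V, hV', hV⟩, rfl⟩
  simpa [Matrix.conjTranspose_conjTranspose] using posDef_conj hDiag hVu

lemma mpow_posDef {A : Matrix n n ℂ} (hA : A.PosDef) (r : ℝ) : (mpow A r).PosDef := by
  obtain ⟨V, d, hV, hV', hd, hAVd⟩ := posDef_decomp hA
  rw [mpow, matFun_decomp _ hV hV' hAVd]
  exact posDef_unitary_conj hV hV' fun i => Real.rpow_pos_of_pos (hd i) r

lemma mpow_herm {A : Matrix n n ℂ} (hA : A.PosDef) (r : ℝ) : (mpow A r)ᴴ = mpow A r :=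
  (mpow_posDef hA r).1

lemma mpow_one' {A : Matrix n n ℂ} (hA : A.PosDef) : mpow A 1 = A := by
  obtain ⟨V, d, hV, hV', hd, hAVd⟩ := posDef_decomp hA
  rw [mpow, matFun_decomp _ hV hV' hAVd]
  have hfun : (fun i => ((d i ^ (1:ℝ) : ℝ) : ℂ)) = fun i => ((d i : ℝ) : ℂ) := by
    funext i; rw [Real.rpow_one]
  rw [hfun, hAVd]

lemma mpow_zero' {A : Matrix n n ℂ} (hA : A.PosDef) : mpow A 0 = 1 := by
  obtain ⟨V, d, hV, hV', hd, hAVd⟩ := posDef_decomp hA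
  rw [mpow, matFun_decomp _ hV hV' hAVd]
  have hfun : (fun i => ((d i ^ (0:ℝ) : ℝ) : ℂ)) = fun _ => (1 : ℂ) := by
    funext i; rw [Real.rpow_zero]; norm_num
  rw [hfun, Matrix.diagonal_one, mul_one, hV]

lemma mpow_add' {A : Matrix n n ℂ} (hA : A.PosDef) (r s : ℝ) :
    mpow A r * mpow A s = mpow A (r + s) := by
  obtain ⟨V, d, hV, hV', hd, hAVd⟩ := posDef_decomp hA
  rw [mpow, mpow, mpow, matFun_decomp _ hV hV' hAVd, matFun_decomp _ hV hV' hAVd,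
    matFun_decomp _ hV hV' hAVd]
  calc V * Matrix.diagonal (fun i => ((d i ^ r : ℝ) : ℂ)) * Vᴴ *
        (V * Matrix.diagonal (fun i => ((d i ^ s : ℝ) : ℂ)) * Vᴴ)
      = V * (Matrix.diagonal (fun i => ((d i ^ r : ℝ) : ℂ)) * ((Vᴴ * V) *
          Matrix.diagonal (fun i => ((d i ^ s : ℝ) : ℂ)))) * Vᴴ := by
        simp only [mul_assoc]
    _ = V * (Matrix.diagonal (fun i => ((d i ^ r : ℝ) : ℂ)) *
          Matrix.diagonal (fun i => ((d i ^ s : ℝ) : ℂ))) * Vᴴ := by rw [hV', one_mul]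
    _ = V * Matrix.diagonal (fun i => ((d i ^ (r + s) : ℝ) : ℂ)) * Vᴴ := by
        rw [Matrix.diagonal_mul_diagonal]
        have hfun : (fun i => ((d i ^ r : ℝ) : ℂ) * ((d i ^ s : ℝ) : ℂ)) =
            fun i => ((d i ^ (r + s) : ℝ) : ℂ) := by
          funext i
          rw [← Complex.ofReal_mul, ← Real.rpow_add (hd i)]
        rw [hfun]

lemma mpow_mpow' {A : Matrix n n ℂ} (hA : A.PosDef) (r s : ℝ) :
    mpow (mpow A r) s = mpow A (r * s) := by
  obtain ⟨V, d, hV, hV', hd, hAVd⟩ := posDef_decomp hA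
  have h1 : mpow A r = V * Matrix.diagonal (fun i => ((d i ^ r : ℝ) : ℂ)) * Vᴴ :=
    matFun_decomp _ hV hV' hAVd
  rw [mpow, matFun_decomp _ hV hV' h1, mpow, matFun_decomp _ hV hV' hAVd]
  have hfun : (fun i => (((d i ^ r) ^ s : ℝ) : ℂ)) = fun i => ((d i ^ (r * s) : ℝ) : ℂ) := by
    funext i
    rw [← Real.rpow_mul (hd i).le]
  rw [hfun]

lemma mpow_neg_one_uniq {M W : Matrix n n ℂ} (hM : M.PosDef) (h1 : W * M = 1) :
    W = mpow M (-1) := by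
  have h2 : M * mpow M (-1) = 1 := by
    nth_rewrite 1 [← mpow_one' hM]
    rw [mpow_add' hM]
    norm_num
    exact mpow_zero' hM
  calc W = W * (M * mpow M (-1)) := by rw [h2, mul_one]
    _ = (W * M) * mpow M (-1) := by rw [mul_assoc]
    _ = mpow M (-1) := by rw [h1, one_mul]

lemma mul_mul_cancel {M : Type*} [Monoid M] {a b : M} (h : a * b = 1) (x : M) :
    a * (b * x) = x := by rw [← mul_assoc, h, one_mul]

lemma key_conj {Z : Matrix n n ℂ} (hZ : (Zᴴ * Z).PosDef) (r : ℝ) :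
    mpow (Z * Zᴴ) r = Z * mpow (Zᴴ * Z) (r - 1) * Zᴴ := by
  obtain ⟨U, lam, hU, hU', hlam, hZZ⟩ := posDef_decomp hZ
  set Dp : ℝ → Matrix n n ℂ := fun e => Matrix.diagonal (fun i => ((lam i ^ e : ℝ) : ℂ))
    with hDpdef
  have hDpmul : ∀ e e', Dp e * Dp e' = Dp (e + e') := by
    intro e e'
    rw [hDpdef]
    simp only
    rw [Matrix.diagonal_mul_diagonal]
    have hfun : (fun i => ((lam i ^ e : ℝ) : ℂ) * ((lam i ^ e' : ℝ) : ℂ)) =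
        fun i => ((lam i ^ (e + e') : ℝ) : ℂ) := by
      funext i
      rw [← Complex.ofReal_mul, ← Real.rpow_add (hlam i)]
    rw [hfun]
  have hDp0 : Dp 0 = 1 := by
    rw [hDpdef]
    simp only
    have hfun : (fun i => ((lam i ^ (0:ℝ) : ℝ) : ℂ)) = fun _ => (1 : ℂ) := by
      funext i; rw [Real.rpow_zero]; norm_num
    rw [hfun, Matrix.diagonal_one]
  have hDpH : ∀ e, (Dp e)ᴴ = Dp e := by
    intro e
    rw [hDpdef]
    simp only
    rw [Matrix.diagonal_conjTranspose]
    have hstar : (star fun i => ((lam i ^ e : ℝ) : ℂ)) = fun i => ((lam i ^ e : ℝ) : ℂ) :=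
      funext fun i => Complex.conj_ofReal _
    rw [hstar]
  have hZZ1 : Zᴴ * Z = U * Dp 1 * Uᴴ := by
    rw [hZZ, hDpdef]
    simp only
    have hfun : (fun i => ((lam i ^ (1:ℝ) : ℝ) : ℂ)) = fun i => ((lam i : ℝ) : ℂ) := by
      funext i; rw [Real.rpow_one]
    rw [hfun]
  set Q : Matrix n n ℂ := Z * U * Dp (-(1/2)) with hQdef
  have hQD : Q * Dp (1/2) = Z * U := by
    rw [hQdef, mul_assoc (Z * U), hDpmul]
    norm_num
    rw [hDp0, mul_one]
  have hZQ : Z = Q * Dp (1/2) * Uᴴ := by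
    rw [hQD, mul_assoc, hU, mul_one]
  have hQQ : Qᴴ * Q = 1 := by
    rw [hQdef]
    simp only [Matrix.conjTranspose_mul, hDpH]
    calc Dp (-(1/2)) * (Uᴴ * Zᴴ) * (Z * U * Dp (-(1/2)))
        = Dp (-(1/2)) * (Uᴴ * ((Zᴴ * Z) * U)) * Dp (-(1/2)) := by simp only [mul_assoc]
      _ = Dp (-(1/2)) * (Uᴴ * ((U * Dp 1 * Uᴴ) * U)) * Dp (-(1/2)) := by rw [hZZ1]
      _ = Dp (-(1/2)) * (Uᴴ * (U * (Dp 1 * (Uᴴ * U)))) * Dp (-(1/2)) := by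
          simp only [mul_assoc]
      _ = Dp (-(1/2)) * Dp 1 * Dp (-(1/2)) := by
          rw [hU', mul_one, mul_mul_cancel hU']
      _ = 1 := by
          rw [hDpmul, hDpmul]
          norm_num
          exact hDp0
  have hQQ' : Q * Qᴴ = 1 := mul_eq_one_comm.mp hQQ
  have hZZT : Z * Zᴴ = Q * Dp 1 * Qᴴ := by
    rw [hZQ]
    simp only [Matrix.conjTranspose_mul, hDpH, Matrix.conjTranspose_conjTranspose, mul_assoc]
    rw [mul_mul_cancel hU']
    rw [← mul_assoc (Dp (1/2)), hDpmul]
    norm_num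
  have hDp1 : Dp 1 = Matrix.diagonal (fun i => ((lam i : ℝ) : ℂ)) := by
    rw [hDpdef]
    simp only
    have hfun : (fun i => ((lam i ^ (1:ℝ) : ℝ) : ℂ)) = fun i => ((lam i : ℝ) : ℂ) := by
      funext i; rw [Real.rpow_one]
    rw [hfun]
  have hmpowZZT : mpow (Z * Zᴴ) r = Q * Dp r * Qᴴ := by
    rw [mpow, matFun_decomp (fun x => x ^ r) hQQ' hQQ (hZZT.trans (by rw [hDp1]))]
  have hmpowZTZ : mpow (Zᴴ * Z) (r - 1) = U * Dp (r - 1) * Uᴴ := by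
    rw [mpow, matFun_decomp (fun x => x ^ (r - 1)) hU hU' hZZ]
  rw [hmpowZZT, hmpowZTZ, hZQ]
  simp only [Matrix.conjTranspose_mul, hDpH, Matrix.conjTranspose_conjTranspose, mul_assoc]
  rw [mul_mul_cancel hU', mul_mul_cancel hU']
  rw [← mul_assoc (Dp (r - 1)), hDpmul, ← mul_assoc (Dp (1/2)), hDpmul]
  rw [show (1/2 + (r - 1 + 1/2) : ℝ) = r by ring]

lemma mul_mul_mul_cancel {M : Type*} [Monoid M] {a b c : M} (h : a * b * c = 1) (x : M) :
    a * (b * (c * x)) = x := by rw [← mul_assoc, ← mul_assoc, h, one_mul]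

lemma geoMean_symm {X Y : Matrix n n ℂ} (hX : X.PosDef) (hY : Y.PosDef) (s : ℝ) :
    geoMean s X Y =
      mpow Y (1/2) * mpow (mpow Y (-(1/2)) * X * mpow Y (-(1/2))) (1 - s) * mpow Y (1/2) := by
  set Xh := mpow X (1/2) with hXhdef
  set Xi := mpow X (-(1/2)) with hXidef
  set Yh := mpow Y (1/2) with hYhdef
  set Yi := mpow Y (-(1/2)) with hYidef
  have hXhXi : Xh * Xi = 1 := by
    rw [hXhdef, hXidef, mpow_add' hX, show (1/2 + -(1/2) : ℝ) = 0 by norm_num, mpow_zero' hX]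
  have hXiXh : Xi * Xh = 1 := by
    rw [hXhdef, hXidef, mpow_add' hX, show (-(1/2) + 1/2 : ℝ) = 0 by norm_num, mpow_zero' hX]
  have hYhYi : Yh * Yi = 1 := by
    rw [hYhdef, hYidef, mpow_add' hY, show (1/2 + -(1/2) : ℝ) = 0 by norm_num, mpow_zero' hY]
  have hYiYh : Yi * Yh = 1 := by
    rw [hYhdef, hYidef, mpow_add' hY, show (-(1/2) + 1/2 : ℝ) = 0 by norm_num, mpow_zero' hY]
  have hYhYh : Yh * Yh = Y := by
    rw [hYhdef, mpow_add' hY, show (1/2 + 1/2 : ℝ) = 1 by norm_num, mpow_one' hY]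
  have hXiXi : Xi * Xi = mpow X (-1) := by
    rw [hXidef, mpow_add' hX, show (-(1/2) + -(1/2) : ℝ) = -1 by norm_num]
  have hXXinv : mpow X (-1) * X = 1 := by
    nth_rewrite 2 [← mpow_one' hX]
    rw [mpow_add' hX, show (-1 + 1 : ℝ) = 0 by norm_num, mpow_zero' hX]
  set Z := Xi * Yh with hZdef
  have hZh : Zᴴ = Yh * Xi := by
    rw [hZdef, Matrix.conjTranspose_mul, hXidef, hYhdef, mpow_herm hX, mpow_herm hY]
  have hZZT : Z * Zᴴ = Xi * Y * Xi := by
    rw [hZh, hZdef]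
    simp only [mul_assoc]
    rw [← mul_assoc Yh Yh, hYhYh]
  set N := Yi * X * Yi with hNdef
  have hN : N.PosDef := by
    have hYiu : IsUnit Yi := ⟨⟨Yi, Yh, hYiYh, hYhYi⟩, rfl⟩
    have := posDef_conj hX hYiu
    rwa [hYidef, mpow_herm hY, ← hYidef, ← hNdef] at this
  have hXiXiX : Xi * Xi * X = 1 := by
    rw [hXiXi]; exact hXXinv
  have hZTZ : Zᴴ * Z = mpow N (-1) := by
    apply mpow_neg_one_uniq hN
    rw [hZh, hZdef, hNdef]
    simp only [mul_assoc]
    rw [mul_mul_cancel hYhYi, mul_mul_mul_cancel hXiXiX, hYhYi]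
  have hZTZpos : (Zᴴ * Z).PosDef := by rw [hZTZ]; exact mpow_posDef hN _
  have hstep : geoMean s X Y = Xh * mpow (Z * Zᴴ) s * Xh := by
    rw [geoMean, hZZT]
  rw [hstep, key_conj hZTZpos s, hZTZ, mpow_mpow' hN,
    show (-1 * (s - 1) : ℝ) = 1 - s by ring, hZh, hZdef]
  simp only [mul_assoc]
  rw [mul_mul_cancel hXhXi, hXiXh, mul_one]


/-- `G_s(G_t(A,B), B) = G_{s+t−s·t}(A,B)`. -/
theorem geoMean_geoMean_right {n : ℕ}
    (A B : Matrix (Fin n) (Fin n) ℂ) (hA : A.PosDef) (hB : B.PosDef) (s t : ℝ) :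
    geoMean s (geoMean t A B) B = geoMean (s + t - s * t) A B := by
  set Ah := mpow A (1/2) with hAhdef
  set Ai := mpow A (-(1/2)) with hAidef
  set Bh := mpow B (1/2) with hBhdef
  set Bi := mpow B (-(1/2)) with hBidef
  have hAhAi : Ah * Ai = 1 := by
    rw [hAhdef, hAidef, mpow_add' hA, show (1/2 + -(1/2) : ℝ) = 0 by norm_num, mpow_zero' hA]
  have hAiAh : Ai * Ah = 1 := by
    rw [hAhdef, hAidef, mpow_add' hA, show (-(1/2) + 1/2 : ℝ) = 0 by norm_num, mpow_zero' hA]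
  have hBhBi : Bh * Bi = 1 := by
    rw [hBhdef, hBidef, mpow_add' hB, show (1/2 + -(1/2) : ℝ) = 0 by norm_num, mpow_zero' hB]
  have hBiBh : Bi * Bh = 1 := by
    rw [hBhdef, hBidef, mpow_add' hB, show (-(1/2) + 1/2 : ℝ) = 0 by norm_num, mpow_zero' hB]
  have hBiBi : Bi * Bi = mpow B (-1) := by
    rw [hBidef, mpow_add' hB, show (-(1/2) + -(1/2) : ℝ) = -1 by norm_num]
  have hBinvB : mpow B (-1) * B = 1 := by
    nth_rewrite 2 [← mpow_one' hB]
    rw [mpow_add' hB, show (-1 + 1 : ℝ) = 0 by norm_num, mpow_zero' hB]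
  set M := Ai * B * Ai with hMdef
  have hM : M.PosDef := by
    have hAiu : IsUnit Ai := ⟨⟨Ai, Ah, hAiAh, hAhAi⟩, rfl⟩
    have := posDef_conj hB hAiu
    rwa [hAidef, mpow_herm hA, ← hAidef, ← hMdef] at this
  have hCdef : geoMean t A B = Ah * mpow M t * Ah := by rw [geoMean]
  have hC : (geoMean t A B).PosDef := by
    rw [hCdef]
    have hAhu : IsUnit Ah := ⟨⟨Ah, Ai, hAhAi, hAiAh⟩, rfl⟩
    have := posDef_conj (mpow_posDef hM t) hAhu
    rwa [hAhdef, mpow_herm hA, ← hAhdef] at this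
  rw [geoMean_symm hC hB s, hCdef]
  set Z := Bi * Ah * mpow M (t/2) with hZdef
  have hZh : Zᴴ = mpow M (t/2) * (Ah * Bi) := by
    rw [hZdef, Matrix.conjTranspose_mul, Matrix.conjTranspose_mul, hAhdef, hBidef,
      mpow_herm hA, mpow_herm hB, mpow_herm hM]
  have hZZT : Z * Zᴴ = Bi * (Ah * mpow M t * Ah) * Bi := by
    rw [hZh, hZdef]
    simp only [mul_assoc]
    rw [← mul_assoc (mpow M (t/2)) (mpow M (t/2)), mpow_add' hM,
      show (t/2 + t/2 : ℝ) = t by ring]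
  have hMinv : Ah * mpow B (-1) * Ah = mpow M (-1) := by
    apply mpow_neg_one_uniq hM
    rw [hMdef]
    simp only [mul_assoc]
    rw [mul_mul_cancel hAhAi, mul_mul_cancel hBinvB, hAhAi]
  have hZTZ : Zᴴ * Z = mpow M (t - 1) := by
    rw [hZh, hZdef]
    simp only [mul_assoc]
    rw [← mul_assoc Bi Bi, hBiBi, ← mul_assoc (mpow B (-1)), ← mul_assoc Ah,
      ← mul_assoc Ah (mpow B (-1)) Ah, hMinv, mpow_add' hM, mpow_add' hM,
      show (t/2 + (-1 + t/2) : ℝ) = t - 1 by ring]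
  have hZTZpos : (Zᴴ * Z).PosDef := by rw [hZTZ]; exact mpow_posDef hM _
  rw [← hZZT, key_conj hZTZpos (1 - s), hZTZ, mpow_mpow' hM,
    show ((t - 1) * (1 - s - 1) : ℝ) = s - s * t by ring, hZh, hZdef, geoMean,
    ← hAhdef, ← hAidef, ← hMdef]
  simp only [mul_assoc]
  rw [mul_mul_cancel hBhBi, hBiBh, mul_one,
    ← mul_assoc (mpow M (s - s * t)), mpow_add' hM,
    ← mul_assoc (mpow M (t/2)) (mpow M (s - s * t + t/2)), mpow_add' hM,
    show (t/2 + (s - s * t + t/2) : ℝ) = s + t - s * t by ring]
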